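/- Let x₁, x₂, z₁ : [0,∞) → ℝ be differentiable functions satisfying, for all t ≥ 0: x₁′ = x₂, x₂′ = (1 + x₁)exp(x₁²) + z₁ − 1, and z₁′ = −x₂·exp(x₁²)·(2x₁² + 2x₁ + 1) − ( x₁ + 3x₂ + 3·((1 + x₁)exp(x₁²) + z₁ − 1) ). Then x₁(t) → 0, x₂(t) → 0, and z₁(t) → 0 as t → ∞. -/

import Mathlib

open Filter Set

private lemma eq_on_nonneg {f g f' : ℝ → ℝ}
    (hf : ∀ t : ℝ, 0 ≤ t → HasDerivAt f (f' t) t)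
    (hg : ∀ t : ℝ, 0 ≤ t → HasDerivAt g (f' t) t)
    (h0 : f 0 = g 0) : ∀ t : ℝ, 0 ≤ t → f t = g t := by
  intro t ht
  refine eq_of_has_deriv_right_eq (a := 0) (b := t) (f' := f')
    (fun x hx => (hf x hx.1).hasDerivWithinAt)
    (fun x hx => (hg x hx.1).hasDerivWithinAt)
    (fun x hx => ((hf x hx.1).continuousAt).continuousWithinAt)
    (fun x hx => ((hg x hx.1).continuousAt).continuousWithinAt)
    h0 t ⟨ht, le_rfl⟩

theorem statement19 (x₁ x₂ z₁ : ℝ → ℝ)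
    (h₁ : ∀ t : ℝ, 0 ≤ t → HasDerivAt x₁ (x₂ t) t)
    (h₂ : ∀ t : ℝ, 0 ≤ t →
      HasDerivAt x₂ ((1 + x₁ t) * Real.exp ((x₁ t) ^ 2) + z₁ t - 1) t)
    (h₃ : ∀ t : ℝ, 0 ≤ t →
      HasDerivAt z₁
        (-(x₂ t) * Real.exp ((x₁ t) ^ 2) * (2 * (x₁ t) ^ 2 + 2 * (x₁ t) + 1) -
          (x₁ t + 3 * x₂ t + 3 * ((1 + x₁ t) * Real.exp ((x₁ t) ^ 2) + z₁ t - 1))) t) :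
    Tendsto x₁ atTop (nhds 0) ∧ Tendsto x₂ atTop (nhds 0) ∧ Tendsto z₁ atTop (nhds 0) := by
  set X3 : ℝ → ℝ := fun t => (1 + x₁ t) * Real.exp ((x₁ t) ^ 2) + z₁ t - 1 with hX3
  -- derivative of X3
  have hd3 : ∀ t : ℝ, 0 ≤ t → HasDerivAt X3 (-(x₁ t + 3 * x₂ t + 3 * X3 t)) t := by
    intro t ht
    have he : HasDerivAt (fun s => Real.exp ((x₁ s) ^ 2))
        (Real.exp ((x₁ t) ^ 2) * (2 * x₁ t * x₂ t)) t := by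
      have := (((h₁ t ht).pow 2).exp)
      convert this using 1
      simp only [Pi.pow_apply]
      norm_num
    have hmul : HasDerivAt (fun s => (1 + x₁ s) * Real.exp ((x₁ s) ^ 2))
        (x₂ t * Real.exp ((x₁ t) ^ 2) + (1 + x₁ t) * (Real.exp ((x₁ t) ^ 2) * (2 * x₁ t * x₂ t))) t :=
      ((hasDerivAt_const t (1:ℝ)).add (h₁ t ht)).mul he |>.congr_deriv (by simp only [Pi.add_apply]; ring)
    have := (hmul.add (h₃ t ht)).sub_const 1
    refine this.congr_deriv ?_
    simp only [hX3]
    ring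
  set C : ℝ := x₁ 0 + 2 * x₂ 0 + X3 0 with hC
  set K : ℝ := x₁ 0 + x₂ 0 with hK
  set M : ℝ := x₁ 0 with hM
  -- Step A: exp t * (x₁ + 2 x₂ + X3) = C on [0,∞)
  have stepA : ∀ t : ℝ, 0 ≤ t →
      Real.exp t * (x₁ t + 2 * x₂ t + X3 t) = C := by
    have := eq_on_nonneg (f := fun t => Real.exp t * (x₁ t + 2 * x₂ t + X3 t))
      (g := fun _ => C) (f' := fun _ => 0)
      (fun t ht => by
        have h := (Real.hasDerivAt_exp t).mul
          (((h₁ t ht).add ((h₂ t ht).const_mul 2)).add (hd3 t ht))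
        refine h.congr_deriv ?_
        simp only [hX3, Pi.add_apply]; ring)
      (fun t _ => hasDerivAt_const t C)
      (by simp [hC, hM])
    simpa using this
  -- Step B: exp t * (x₁ + x₂) = K + C t on [0,∞)
  have stepB : ∀ t : ℝ, 0 ≤ t → Real.exp t * (x₁ t + x₂ t) = K + C * t := by
    have := eq_on_nonneg (f := fun t => Real.exp t * (x₁ t + x₂ t))
      (g := fun t => K + C * t) (f' := fun t => if 0 ≤ t then C else 0)
      (fun t ht => by
        have h := (Real.hasDerivAt_exp t).mul ((h₁ t ht).add (h₂ t ht))
        simp only [if_pos ht]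
        rw [← stepA t ht]
        refine h.congr_deriv ?_
        simp only [hX3, Pi.add_apply]; ring)
      (fun t ht => by
        simp only [if_pos ht]
        simpa using ((hasDerivAt_id t).const_mul C).const_add K)
      (by simp [hK, hM])
    simpa using this
  -- Step C: exp t * x₁ = M + K t + C t²/2 on [0,∞)
  have stepC : ∀ t : ℝ, 0 ≤ t →
      Real.exp t * x₁ t = M + K * t + C / 2 * t ^ 2 := by
    have := eq_on_nonneg (f := fun t => Real.exp t * x₁ t)
      (g := fun t => M + K * t + C / 2 * t ^ 2)
      (f' := fun t => if 0 ≤ t then K + C * t else 0)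
      (fun t ht => by
        have h := (Real.hasDerivAt_exp t).mul (h₁ t ht)
        simp only [if_pos ht]
        rw [← stepB t ht]
        refine h.congr_deriv ?_
        ring)
      (fun t ht => by
        simp only [if_pos ht]
        have : HasDerivAt (fun t : ℝ => M + K * t + C / 2 * t ^ 2)
            (K * 1 + C / 2 * (2 * t ^ 1 * 1)) t := by
          exact (((hasDerivAt_id t).const_mul K).const_add M).add
            (((hasDerivAt_id t).pow 2).const_mul (C / 2))
        convert this using 1
        ring)
      (by simp [hM])
    simpa using this
  -- limits
  have hpoly : ∀ (a b c : ℝ), Tendsto (fun t : ℝ => (a + b * t + c * t ^ 2) * Real.exp (-t))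
      atTop (nhds 0) := by
    intro a b c
    have h0 := Real.tendsto_pow_mul_exp_neg_atTop_nhds_zero 0
    have h1 := Real.tendsto_pow_mul_exp_neg_atTop_nhds_zero 1
    have h2 := Real.tendsto_pow_mul_exp_neg_atTop_nhds_zero 2
    have := ((h0.const_mul a).add (h1.const_mul b)).add (h2.const_mul c)
    simp only [mul_zero, add_zero, zero_add] at this
    refine this.congr fun t => by ring
  have hx1lim : Tendsto x₁ atTop (nhds 0) := by
    refine (hpoly M K (C / 2)).congr' ?_
    filter_upwards [eventually_ge_atTop (0:ℝ)] with t ht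
    have hexp : Real.exp t ≠ 0 := (Real.exp_pos t).ne'
    rw [Real.exp_neg, ← stepC t ht]
    field_simp
  have hx12 : Tendsto (fun t => x₁ t + x₂ t) atTop (nhds 0) := by
    have : Tendsto (fun t : ℝ => (K + C * t + 0 * t ^ 2) * Real.exp (-t)) atTop (nhds 0) :=
      hpoly K C 0
    refine this.congr' ?_
    filter_upwards [eventually_ge_atTop (0:ℝ)] with t ht
    have hexp : Real.exp t ≠ 0 := (Real.exp_pos t).ne'
    rw [Real.exp_neg]
    have hb := stepB t ht
    field_simp
    linear_combination (-1 : ℝ) * hb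
  have hx2lim : Tendsto x₂ atTop (nhds 0) := by
    have := hx12.sub hx1lim
    simpa using this.congr fun t => by ring
  have hX3lim : Tendsto X3 atTop (nhds 0) := by
    have hw : Tendsto (fun t => x₁ t + 2 * x₂ t + X3 t) atTop (nhds 0) := by
      have : Tendsto (fun t : ℝ => (C + 0 * t + 0 * t ^ 2) * Real.exp (-t)) atTop (nhds 0) :=
        hpoly C 0 0
      refine this.congr' ?_
      filter_upwards [eventually_ge_atTop (0:ℝ)] with t ht
      have hexp : Real.exp t ≠ 0 := (Real.exp_pos t).ne'
      rw [Real.exp_neg]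
      have ha := stepA t ht
      field_simp
      linear_combination (-1 : ℝ) * ha
    have := (hw.sub hx1lim).sub (hx2lim.const_mul 2)
    simpa using this.congr fun t => by ring
  have hz1lim : Tendsto z₁ atTop (nhds 0) := by
    have hcont : Tendsto (fun t => (1 + x₁ t) * Real.exp ((x₁ t) ^ 2)) atTop (nhds 1) := by
      have hc : Continuous (fun a : ℝ => (1 + a) * Real.exp (a ^ 2)) := by continuity
      have := (hc.tendsto 0).comp hx1lim
      simpa [Function.comp_def] using this
    have := (hX3lim.sub hcont).add (tendsto_const_nhds (x := (1:ℝ)))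
    have h2 : Tendsto (fun t => X3 t - (1 + x₁ t) * Real.exp ((x₁ t) ^ 2) + 1) atTop (nhds 0) := by
      simpa using this
    refine h2.congr fun t => by simp [hX3]; ring
  exact ⟨hx1lim, hx2lim, hz1lim⟩
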